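/- Hard look-ahead strengthening does not always yield a fixpoint of hard one-step strengthening: there exist an initial gossip graph G and a syntactic protocol P with (P^■)^□(G) ≠ P^■(G). Concretely, for P = LNS and G the 'diamond' graph on agents {0,1,2,3} with N the reflexive closure of {(2,0),(2,1),(3,0),(3,1)} and S the identity: LNS^■(G) has exactly 8 successful and 8 unsuccessful terminal sequences, while (LNS^■)^□(G) has exactly 8 successful and 4 unsuccessful terminal sequences; in particular (LNS^■)^□(G) is a proper subset of LNS^■(G). -/

import Mathlib

set_option maxHeartbeats 1000000

structure GossipGraph (A : Type) : Type where
  N : A → A → Prop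
  S : A → A → Prop
  refl_S : ∀ a, S a a
  S_sub_N : ∀ a b, S a b → N a b

namespace Gossip

variable {A : Type}

def Initial (G : GossipGraph A) : Prop := ∀ a b, G.S a b ↔ a = b

def doCall (G : GossipGraph A) (c : A × A) : GossipGraph A where
  N x y := G.N x y ∨ ((x = c.1 ∨ x = c.2) ∧ (G.N c.1 y ∨ G.N c.2 y))
  S x y := G.S x y ∨ ((x = c.1 ∨ x = c.2) ∧ (G.S c.1 y ∨ G.S c.2 y))
  refl_S a := Or.inl (G.refl_S a)
  S_sub_N a b h := by
    rcases h with h | ⟨h1, h2 | h2⟩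
    · exact Or.inl (G.S_sub_N a b h)
    · exact Or.inr ⟨h1, Or.inl (G.S_sub_N _ _ h2)⟩
    · exact Or.inr ⟨h1, Or.inr (G.S_sub_N _ _ h2)⟩

def doCalls (G : GossipGraph A) (σ : List (A × A)) : GossipGraph A :=
  σ.foldl doCall G

def PossibleSeq (G : GossipGraph A) : List (A × A) → Prop
  | [] => True
  | c :: σ => c.1 ≠ c.2 ∧ G.N c.1 c.2 ∧ PossibleSeq (doCall G c) σ

mutual
  inductive Form (A : Type) : Type where
    | top : Form A
    | atomN : A → A → Form A
    | atomS : A → A → Form A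
    | neg : Form A → Form A
    | conj : Form A → Form A → Form A
    | K : A → (A → A → Form A) → Form A → Form A
    | box : Prog A → Form A → Form A
  inductive Prog (A : Type) : Type where
    | test : Form A → Prog A
    | call : A → A → Prog A
    | seq : Prog A → Prog A → Prog A
    | cup : Prog A → Prog A → Prog A
    | star : Prog A → Prog A
end

abbrev Protocol (A : Type) := A → A → Form A

inductive Epi (G : GossipGraph A) (perm : List (A × A) → (A × A) → Prop) (a : A) :
    List (A × A) → List (A × A) → Prop where
  | refl : Epi G perm a [] []
  | call_out {σ τ : List (A × A)} {b : A} :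
      Epi G perm a σ τ →
      (∀ x, (doCalls G σ).N b x ↔ (doCalls G τ).N b x) →
      (∀ x, (doCalls G σ).S b x ↔ (doCalls G τ).S b x) →
      perm σ (a, b) → perm τ (a, b) →
      Epi G perm a (σ ++ [(a, b)]) (τ ++ [(a, b)])
  | call_in {σ τ : List (A × A)} {b : A} :
      Epi G perm a σ τ →
      (∀ x, (doCalls G σ).N b x ↔ (doCalls G τ).N b x) →
      (∀ x, (doCalls G σ).S b x ↔ (doCalls G τ).S b x) →
      perm σ (b, a) → perm τ (b, a) →
      Epi G perm a (σ ++ [(b, a)]) (τ ++ [(b, a)])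
  | other {σ τ : List (A × A)} {c d e f : A} :
      Epi G perm a σ τ →
      c ≠ a → d ≠ a → e ≠ a → f ≠ a →
      perm σ (c, d) → perm τ (e, f) →
      Epi G perm a (σ ++ [(c, d)]) (τ ++ [(e, f)])

mutual
  def Sat (G : GossipGraph A) : List (A × A) → Form A → Prop
    | _, Form.top => True
    | σ, Form.atomN a b => (doCalls G σ).N a b
    | σ, Form.atomS a b => (doCalls G σ).S a b
    | σ, Form.neg φ => ¬ Sat G σ φ
    | σ, Form.conj φ ψ => Sat G σ φ ∧ Sat G σ ψ
    | σ, Form.K a P φ =>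
        ∀ τ, Epi G (fun ρ c => c.1 ≠ c.2 ∧ (doCalls G ρ).N c.1 c.2 ∧ Sat G ρ (P c.1 c.2)) a τ σ →
          Sat G τ φ
    | σ, Form.box π φ => ∀ τ, ProgRel G π σ τ → Sat G τ φ
  def ProgRel (G : GossipGraph A) : Prog A → List (A × A) → List (A × A) → Prop
    | Prog.test φ, σ, τ => σ = τ ∧ Sat G σ φ
    | Prog.call a b, σ, τ => a ≠ b ∧ (doCalls G σ).N a b ∧ τ = σ ++ [(a, b)]
    | Prog.seq π π', σ, τ => ∃ ρ, ProgRel G π σ ρ ∧ ProgRel G π' ρ τ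
    | Prog.cup π π', σ, τ => ProgRel G π σ τ ∨ ProgRel G π' σ τ
    | Prog.star π, σ, τ => Relation.ReflTransGen (fun x y => ProgRel G π x y) σ τ
end


/-- A call `ab` is `P`-permitted at `(G, σ)` iff `a ≠ b`, `N^σ a b` and `G,σ ⊨ P_{ab}`. -/
def Permits (G : GossipGraph A) (P : Protocol A) (σ : List (A × A)) (c : A × A) : Prop :=
  c.1 ≠ c.2 ∧ (doCalls G σ).N c.1 c.2 ∧ Sat G σ (P c.1 c.2)

/-- The least set of call sequences containing `ε` and closed under adding permitted calls. -/
inductive Ext (G : GossipGraph A) (perm : List (A × A) → (A × A) → Prop) : List (A × A) → Prop where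
  | nil : Ext G perm []
  | snoc {σ : List (A × A)} {c : A × A} : Ext G perm σ → perm σ c → Ext G perm (σ ++ [c])

/-- The extension of a syntactic protocol `P` on an (initial) gossip graph `G`. -/
def extension (P : Protocol A) (G : GossipGraph A) : Set (List (A × A)) :=
  { σ | Ext G (Permits G P) σ }

/-- A formula is valid iff it is true at every gossip state, i.e. at every pair of an
initial gossip graph and a call sequence possible on it. -/
def Valid (φ : Form A) : Prop :=
  ∀ G : GossipGraph A, Initial G → ∀ σ : List (A × A), PossibleSeq G σ → Sat G σ φ

def impF (φ ψ : Form A) : Form A := Form.neg (Form.conj φ (Form.neg ψ))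
def orF (φ ψ : Form A) : Form A := Form.neg (Form.conj (Form.neg φ) (Form.neg ψ))
def iffF (φ ψ : Form A) : Form A := Form.conj (impF φ ψ) (impF ψ φ)
/-- The epistemic "possibility" dual `K̂ := ¬K¬`. -/
def hatK (a : A) (P : Protocol A) (φ : Form A) : Form A := Form.neg (Form.K a P (Form.neg φ))

/-- A semantic protocol, as raw data: a map from (initial) gossip graphs to sets of call
sequences. -/
abbrev RawSem (A : Type) := GossipGraph A → Set (List (A × A))

/-- For a semantic protocol, a call `c` is permitted at `(G,σ)` iff `σ;c ∈ P(G)`. -/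
def semPerm (Q : RawSem A) (G : GossipGraph A) (σ : List (A × A)) (c : A × A) : Prop :=
  σ ++ [c] ∈ Q G

/-- `σ` is terminal (in `Q(G)`) iff no further call is permitted. -/
def TerminalIn (Q : RawSem A) (G : GossipGraph A) (σ : List (A × A)) : Prop :=
  ∀ c : A × A, σ ++ [c] ∉ Q G

/-- All agents are experts: everyone knows all secrets. -/
def AllExpert (G : GossipGraph A) : Prop := ∀ a b : A, G.S a b

/-- A semantic protocol: assigns to each initial gossip graph a set of call sequences
possible on it, containing the empty sequence and closed under prefixes. -/
structure SemProtocol (A : Type) : Type where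
  ext : GossipGraph A → Set (List (A × A))
  nil_mem : ∀ G : GossipGraph A, Initial G → [] ∈ ext G
  prefix_closed : ∀ G : GossipGraph A, Initial G → ∀ σ c, σ ++ [c] ∈ ext G → σ ∈ ext G
  possible : ∀ G : GossipGraph A, Initial G → ∀ σ ∈ ext G, PossibleSeq G σ

/-- A semantic protocol is epistemic iff a call `ab` is permitted at `(G,σ)` exactly when it
is permitted at all states that agent `a` cannot distinguish from `(G,σ)`. -/
def SemEpistemic (Q : RawSem A) : Prop :=
  ∀ G : GossipGraph A, Initial G → ∀ σ ∈ Q G, ∀ a b : A, a ≠ b →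
    (σ ++ [(a, b)] ∈ Q G ↔ ∀ τ, Epi G (semPerm Q G) a τ σ → τ ++ [(a, b)] ∈ Q G)

/-- Relabelling the agents of a gossip graph along a permutation. -/
def mapGraph (J : Equiv.Perm A) (G : GossipGraph A) : GossipGraph A where
  N x y := G.N (J.symm x) (J.symm y)
  S x y := G.S (J.symm x) (J.symm y)
  refl_S a := G.refl_S _
  S_sub_N a b h := G.S_sub_N _ _ h

/-- Relabelling a call sequence, callwise. -/
def mapSeq (J : Equiv.Perm A) (σ : List (A × A)) : List (A × A) :=
  σ.map (fun c => (J c.1, J c.2))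

mutual
  /-- Relabelling the agents in a formula along a permutation. -/
  def mapForm (J : Equiv.Perm A) : Form A → Form A
    | Form.top => Form.top
    | Form.atomN a b => Form.atomN (J a) (J b)
    | Form.atomS a b => Form.atomS (J a) (J b)
    | Form.neg φ => Form.neg (mapForm J φ)
    | Form.conj φ ψ => Form.conj (mapForm J φ) (mapForm J ψ)
    | Form.K a P φ => Form.K (J a) (fun x y => mapForm J (P (J.symm x) (J.symm y))) (mapForm J φ)
    | Form.box π φ => Form.box (mapProg J π) (mapForm J φ)
  /-- Relabelling the agents in a program along a permutation. -/
  def mapProg (J : Equiv.Perm A) : Prog A → Prog A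
    | Prog.test φ => Prog.test (mapForm J φ)
    | Prog.call a b => Prog.call (J a) (J b)
    | Prog.seq π π' => Prog.seq (mapProg J π) (mapProg J π')
    | Prog.cup π π' => Prog.cup (mapProg J π) (mapProg J π')
    | Prog.star π => Prog.star (mapProg J π)
end

/-- A semantic protocol is symmetric iff it commutes with relabelling of the agents. -/
def SemSymmetric (Q : RawSem A) : Prop :=
  ∀ (J : Equiv.Perm A) (G : GossipGraph A), Initial G →
    Q (mapGraph J G) = mapSeq J '' Q G

def listConj (l : List (Form A)) : Form A := l.foldr Form.conj Form.top
def listDisj (l : List (Form A)) : Form A := l.foldr orF (Form.neg Form.top)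

noncomputable def pairsList (A : Type) [Fintype A] : List (A × A) := (Finset.univ : Finset (A × A)).toList
noncomputable def distinctPairs (A : Type) [Fintype A] [DecidableEq A] : List (A × A) :=
  (pairsList A).filter (fun c => decide (c.1 ≠ c.2))

/-- The formula `Ex`: all agents are experts. -/
noncomputable def ExForm (A : Type) [Fintype A] : Form A :=
  listConj ((pairsList A).map (fun c => Form.atomS c.1 c.2))

/-- `Ex ∨ ⋁_{i≠j} (N_ij ∧ P_ij)`. -/
noncomputable def oneStepBody (A : Type) [Fintype A] [DecidableEq A] (P : Protocol A) : Form A :=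
  orF (ExForm A) (listDisj ((distinctPairs A).map (fun c => Form.conj (Form.atomN c.1 c.2) (P c.1 c.2))))

/-- Hard one-step strengthening: `P_ab ∧ K_a^P [ab](Ex ∨ ⋁_{i≠j}(N_ij ∧ P_ij))`. -/
noncomputable def hardOneStep {A : Type} [Fintype A] [DecidableEq A] (P : Protocol A) : Protocol A :=
  fun a b => Form.conj (P a b) (Form.K a P (Form.box (Prog.call a b) (oneStepBody A P)))

/-- Soft one-step strengthening: `P_ab ∧ K̂_a^P [ab](Ex ∨ ⋁_{i≠j}(N_ij ∧ P_ij))`. -/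
noncomputable def softOneStep {A : Type} [Fintype A] [DecidableEq A] (P : Protocol A) : Protocol A :=
  fun a b => Form.conj (P a b) (hatK a P (Form.box (Prog.call a b) (oneStepBody A P)))

/-- The protocol `P` as a program:
`(⋃_{a≠b} ?(N_ab ∧ P_ab);ab)* ; ?⋀_{a≠b} ¬(N_ab ∧ P_ab)`. -/
noncomputable def protProg (A : Type) [Fintype A] [DecidableEq A] (P : Protocol A) : Prog A :=
  Prog.seq
    (Prog.star (((distinctPairs A).map (fun c =>
      Prog.seq (Prog.test (Form.conj (Form.atomN c.1 c.2) (P c.1 c.2))) (Prog.call c.1 c.2))).foldr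
        Prog.cup (Prog.test (Form.neg Form.top))))
    (Prog.test (listConj ((distinctPairs A).map (fun c =>
      Form.neg (Form.conj (Form.atomN c.1 c.2) (P c.1 c.2))))))

/-- Hard look-ahead strengthening: `P_ab ∧ K_a^P [ab]⟨P⟩Ex`. -/
noncomputable def hardLookAhead {A : Type} [Fintype A] [DecidableEq A] (P : Protocol A) : Protocol A :=
  fun a b => Form.conj (P a b)
    (Form.K a P (Form.box (Prog.call a b)
      (Form.neg (Form.box (protProg A P) (Form.neg (ExForm A))))))

/-- Soft look-ahead strengthening: `P_ab ∧ K̂_a^P [ab]⟨P⟩Ex`. -/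
noncomputable def softLookAhead {A : Type} [Fintype A] [DecidableEq A] (P : Protocol A) : Protocol A :=
  fun a b => Form.conj (P a b)
    (hatK a P (Form.box (Prog.call a b)
      (Form.neg (Form.box (protProg A P) (Form.neg (ExForm A))))))

/-- Hard uniform backward defoliation of a semantic protocol. -/
def HUBD (Q : RawSem A) : RawSem A := fun G =>
  { σ | σ ∈ Q G ∧ (σ = [] ∨ ∃ τ : List (A × A), ∃ a b : A, σ = τ ++ [(a, b)] ∧
      ∀ τ', Epi G (semPerm Q G) a τ' τ →
        (τ' ++ [(a, b)] ∈ Q G ∧ TerminalIn Q G (τ' ++ [(a, b)])) →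
          AllExpert (doCalls G (τ' ++ [(a, b)]))) }

/-- Soft uniform backward defoliation of a semantic protocol. -/
def SUBD (Q : RawSem A) : RawSem A := fun G =>
  { σ | σ ∈ Q G ∧ (σ = [] ∨ ∃ τ : List (A × A), ∃ a b : A, σ = τ ++ [(a, b)] ∧
      ∃ τ', Epi G (semPerm Q G) a τ' τ ∧
        ((τ' ++ [(a, b)] ∈ Q G ∧ TerminalIn Q G (τ' ++ [(a, b)])) →
          AllExpert (doCalls G (τ' ++ [(a, b)])))) }

/-- The syntactic protocol LNS: `LNS_ab := ¬ S_ab`. -/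
def LNSsyn (A : Type) : Protocol A := fun a b => Form.neg (Form.atomS a b)

/-- LNS-permitted: call `ab` permitted at `(G,σ)` iff `N^σ a b` and not `S^σ a b`. -/
def LNSperm (G : GossipGraph A) (σ : List (A × A)) (c : A × A) : Prop :=
  c.1 ≠ c.2 ∧ (doCalls G σ).N c.1 c.2 ∧ ¬ (doCalls G σ).S c.1 c.2

/-- LNS as a semantic protocol. -/
def LNSsem : RawSem A := fun G => { σ | Ext G (LNSperm G) σ }

/-- A semantic protocol is strongly successful on `G` iff every terminal sequence makes
all agents experts. -/
def StronglySuccessfulOn (Q : RawSem A) (G : GossipGraph A) : Prop :=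
  ∀ σ ∈ Q G, TerminalIn Q G σ → AllExpert (doCalls G σ)

/-- A semantic protocol is weakly successful on `G` iff some terminal sequence makes
all agents experts. -/
def WeaklySuccessfulOn (Q : RawSem A) (G : GossipGraph A) : Prop :=
  ∃ σ ∈ Q G, TerminalIn Q G σ ∧ AllExpert (doCalls G σ)


/-- The "diamond" initial gossip graph on agents 0,1,2,3:
`N` is the reflexive closure of {(2,0),(2,1),(3,0),(3,1)} and `S` is the identity. -/
def diamond : GossipGraph (Fin 4) where
  N x y := x = y ∨ (x = 2 ∧ y = 0) ∨ (x = 2 ∧ y = 1) ∨ (x = 3 ∧ y = 0) ∨ (x = 3 ∧ y = 1)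
  S x y := x = y
  refl_S a := rfl
  S_sub_N a b h := Or.inl h

/-- The successful terminal sequences of a semantic protocol on `G`. -/
def succTerminals {A : Type} (Q : RawSem A) (G : GossipGraph A) : Set (List (A × A)) :=
  {σ | σ ∈ Q G ∧ TerminalIn Q G σ ∧ AllExpert (doCalls G σ)}

/-- The unsuccessful terminal sequences of a semantic protocol on `G`. -/
def unsuccTerminals {A : Type} (Q : RawSem A) (G : GossipGraph A) : Set (List (A × A)) :=
  {σ | σ ∈ Q G ∧ TerminalIn Q G σ ∧ ¬ AllExpert (doCalls G σ)}


section Diamond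

abbrev C := Fin 4 × Fin 4

/-- One call-update on a relation represented as a `Finset`. -/
def stepF (s : Finset C) (c : C) : Finset C :=
  s ∪ Finset.univ.filter (fun p => (p.1 = c.1 ∨ p.1 = c.2) ∧ ((c.1, p.2) ∈ s ∨ (c.2, p.2) ∈ s))

def N0 : Finset C := {(0,0),(1,1),(2,2),(3,3),(2,0),(2,1),(3,0),(3,1)}
def S0 : Finset C := {(0,0),(1,1),(2,2),(3,3)}

def NF (σ : List C) : Finset C := σ.foldl stepF N0
def SF (σ : List C) : Finset C := σ.foldl stepF S0

instance (a b : Fin 4) : Decidable (diamond.N a b) :=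
  inferInstanceAs (Decidable (a = b ∨ (a = 2 ∧ b = 0) ∨ (a = 2 ∧ b = 1) ∨ (a = 3 ∧ b = 0) ∨ (a = 3 ∧ b = 1)))

instance (a b : Fin 4) : Decidable (diamond.S a b) := inferInstanceAs (Decidable (a = b))

lemma mem_foldl_N : ∀ (σ : List C) (G : GossipGraph (Fin 4)) (s : Finset C),
    (∀ p : C, p ∈ s ↔ G.N p.1 p.2) → ∀ p : C,
      p ∈ σ.foldl stepF s ↔ (doCalls G σ).N p.1 p.2
  | [], _, _, h, p => h p
  | c :: σ, G, s, h, p => by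
    have hstep : ∀ p : C, p ∈ stepF s c ↔ (doCall G c).N p.1 p.2 := by
      intro p; simp [stepF, doCall, h]
    exact mem_foldl_N σ (doCall G c) (stepF s c) hstep p

lemma mem_foldl_S : ∀ (σ : List C) (G : GossipGraph (Fin 4)) (s : Finset C),
    (∀ p : C, p ∈ s ↔ G.S p.1 p.2) → ∀ p : C,
      p ∈ σ.foldl stepF s ↔ (doCalls G σ).S p.1 p.2
  | [], _, _, h, p => h p
  | c :: σ, G, s, h, p => by
    have hstep : ∀ p : C, p ∈ stepF s c ↔ (doCall G c).S p.1 p.2 := by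
      intro p; simp [stepF, doCall, h]
    exact mem_foldl_S σ (doCall G c) (stepF s c) hstep p

lemma mem_NF (σ : List C) (p : C) : p ∈ NF σ ↔ (doCalls diamond σ).N p.1 p.2 :=
  mem_foldl_N σ diamond N0 (by decide) p

lemma mem_SF (σ : List C) (p : C) : p ∈ SF σ ↔ (doCalls diamond σ).S p.1 p.2 :=
  mem_foldl_S σ diamond S0 (by decide) p

end Diamond


section FastState

def getB (m : Nat) (a b : Fin 4) : Bool := m.testBit (4 * a.val + b.val)

def updB (m : Nat) (c : C) : Nat :=
  let r := ((m >>> (4 * c.1.val)) ||| (m >>> (4 * c.2.val))) &&& 15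
  m ||| (r <<< (4 * c.1.val)) ||| (r <<< (4 * c.2.val))

lemma getB_updB (m : Nat) (c : C) (a b : Fin 4) :
    getB (updB m c) a b = true ↔
      (getB m a b = true ∨
        ((a = c.1 ∨ a = c.2) ∧ (getB m c.1 b = true ∨ getB m c.2 b = true))) := by
  have hb4 : b.val < 4 := b.isLt
  set r := ((m >>> (4 * c.1.val)) ||| (m >>> (4 * c.2.val))) &&& 15 with hrdef
  have hr : r < 16 := by
    have : r ≤ 15 := Nat.and_le_right
    omega
  have hrb : r.testBit b.val = (getB m c.1 b || getB m c.2 b) := by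
    rw [hrdef, Nat.testBit_and, Nat.testBit_or, Nat.testBit_shiftRight, Nat.testBit_shiftRight]
    have h15 : (15 : Nat).testBit b.val = true := by
      rw [show (15 : Nat) = 2 ^ 4 - 1 from rfl, Nat.testBit_two_pow_sub_one]
      simpa using hb4
    rw [h15, Bool.and_true]
    rfl
  have hA : ∀ i : Fin 4, (r <<< (4 * i.val)).testBit (4 * a.val + b.val) =
      (decide (a = i) && r.testBit b.val) := by
    intro i
    rw [Nat.testBit_shiftLeft]
    by_cases hai : a = i
    · subst hai
      have h1 : (decide (4 * a.val + b.val ≥ 4 * a.val)) = true := by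
        simp [Nat.le_add_right]
      rw [h1, show 4 * a.val + b.val - 4 * a.val = b.val from by omega]
      simp
    · rw [decide_eq_false hai, Bool.false_and]
      have hv : a.val ≠ i.val := fun h => hai (Fin.ext h)
      by_cases hle : 4 * i.val ≤ 4 * a.val + b.val
      · have h4 : 4 ≤ 4 * a.val + b.val - 4 * i.val := by omega
        have hlt : r < 2 ^ (4 * a.val + b.val - 4 * i.val) := by
          calc r < 16 := hr
            _ = 2 ^ 4 := rfl
            _ ≤ 2 ^ (4 * a.val + b.val - 4 * i.val) := Nat.pow_le_pow_right (by norm_num) h4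
        rw [Nat.testBit_lt_two_pow hlt]
        simp
      · simp [hle]
  show (updB m c).testBit _ = true ↔ _
  rw [show updB m c = m ||| (r <<< (4 * c.1.val)) ||| (r <<< (4 * c.2.val)) from rfl]
  rw [Nat.testBit_or, Nat.testBit_or]
  rw [show m.testBit (4 * a.val + b.val) = getB m a b from rfl]
  rw [hA c.1, hA c.2, hrb]
  cases hx : getB m a b <;> cases hy : getB m c.1 b <;> cases hz : getB m c.2 b <;>
    by_cases h1 : a = c.1 <;> by_cases h2 : a = c.2 <;> simp [h1, h2]

def natNF (σ : List C) : Nat := σ.foldl updB 46881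
def natSF (σ : List C) : Nat := σ.foldl updB 33825

def nB (σ : List C) (a b : Fin 4) : Bool := getB (natNF σ) a b
def sB (σ : List C) (a b : Fin 4) : Bool := getB (natSF σ) a b

lemma getB_foldl_N : ∀ (σ : List C) (G : GossipGraph (Fin 4)) (m : Nat),
    (∀ a b, getB m a b = true ↔ G.N a b) → ∀ a b,
      getB (σ.foldl updB m) a b = true ↔ (doCalls G σ).N a b
  | [], _, _, h, a, b => h a b
  | c :: σ, G, m, h, a, b => by
    have hstep : ∀ a b, getB (updB m c) a b = true ↔ (doCall G c).N a b := by
      intro a b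
      rw [getB_updB]
      simp only [h]
      exact Iff.rfl
    exact getB_foldl_N σ (doCall G c) (updB m c) hstep a b

lemma getB_foldl_S : ∀ (σ : List C) (G : GossipGraph (Fin 4)) (m : Nat),
    (∀ a b, getB m a b = true ↔ G.S a b) → ∀ a b,
      getB (σ.foldl updB m) a b = true ↔ (doCalls G σ).S a b
  | [], _, _, h, a, b => h a b
  | c :: σ, G, m, h, a, b => by
    have hstep : ∀ a b, getB (updB m c) a b = true ↔ (doCall G c).S a b := by
      intro a b
      rw [getB_updB]
      simp only [h]
      exact Iff.rfl
    exact getB_foldl_S σ (doCall G c) (updB m c) hstep a b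

lemma nB_iff (σ : List C) (a b : Fin 4) :
    nB σ a b = true ↔ (doCalls diamond σ).N a b :=
  getB_foldl_N σ diamond 46881 (by decide) a b

lemma sB_iff (σ : List C) (a b : Fin 4) :
    sB σ a b = true ↔ (doCalls diamond σ).S a b :=
  getB_foldl_S σ diamond 33825 (by decide) a b

end FastState


section SatHelpers

variable {A : Type}

lemma sat_top {G : GossipGraph A} {σ} : Sat G σ Form.top ↔ True := by simp [Sat]

lemma sat_atomN {G : GossipGraph A} {σ a b} : Sat G σ (Form.atomN a b) ↔ (doCalls G σ).N a b := by
  simp [Sat]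

lemma sat_atomS {G : GossipGraph A} {σ a b} : Sat G σ (Form.atomS a b) ↔ (doCalls G σ).S a b := by
  simp [Sat]

lemma sat_neg {G : GossipGraph A} {σ φ} : Sat G σ (Form.neg φ) ↔ ¬ Sat G σ φ := by simp [Sat]

lemma sat_conj {G : GossipGraph A} {σ φ ψ} :
    Sat G σ (Form.conj φ ψ) ↔ Sat G σ φ ∧ Sat G σ ψ := by simp [Sat]

lemma sat_orF {G : GossipGraph A} {σ φ ψ} :
    Sat G σ (orF φ ψ) ↔ Sat G σ φ ∨ Sat G σ ψ := by
  simp only [orF, sat_neg, sat_conj]; tauto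

lemma sat_K {G : GossipGraph A} {σ a P φ} :
    Sat G σ (Form.K a P φ) ↔
      ∀ τ, Epi G (fun ρ c => c.1 ≠ c.2 ∧ (doCalls G ρ).N c.1 c.2 ∧ Sat G ρ (P c.1 c.2)) a τ σ →
        Sat G τ φ := by
  simp [Sat]

lemma sat_box {G : GossipGraph A} {σ π φ} :
    Sat G σ (Form.box π φ) ↔ ∀ τ, ProgRel G π σ τ → Sat G τ φ := by simp [Sat]

lemma sat_box_call {G : GossipGraph A} {σ a b φ} :
    Sat G σ (Form.box (Prog.call a b) φ) ↔
      (a ≠ b → (doCalls G σ).N a b → Sat G (σ ++ [(a, b)]) φ) := by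
  rw [sat_box]
  constructor
  · intro h hne hN; exact h _ ⟨hne, hN, rfl⟩
  · rintro h τ ⟨hne, hN, rfl⟩; exact h hne hN

lemma sat_listConj {G : GossipGraph A} {σ} : ∀ {l : List (Form A)},
    Sat G σ (listConj l) ↔ ∀ φ ∈ l, Sat G σ φ
  | [] => by simp [listConj, sat_top]
  | φ :: l => by
    simp only [listConj, List.foldr_cons, sat_conj, List.mem_cons]
    rw [show List.foldr Form.conj Form.top l = listConj l from rfl, sat_listConj]
    constructor
    · rintro ⟨h1, h2⟩ ψ (rfl | hψ); exact h1; exact h2 _ hψ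
    · intro h; exact ⟨h _ (Or.inl rfl), fun ψ hψ => h _ (Or.inr hψ)⟩

lemma sat_listDisj {G : GossipGraph A} {σ} : ∀ {l : List (Form A)},
    Sat G σ (listDisj l) ↔ ∃ φ ∈ l, Sat G σ φ
  | [] => by simp [listDisj, sat_neg, sat_top]
  | φ :: l => by
    simp only [listDisj, List.foldr_cons, sat_orF, List.mem_cons]
    rw [show List.foldr orF (Form.neg Form.top) l = listDisj l from rfl, sat_listDisj]
    constructor
    · rintro (h | ⟨ψ, hψ, h⟩)
      · exact ⟨φ, Or.inl rfl, h⟩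
      · exact ⟨ψ, Or.inr hψ, h⟩
    · rintro ⟨ψ, (rfl | hψ), h⟩
      · exact Or.inl h
      · exact Or.inr ⟨ψ, hψ, h⟩

lemma mem_pairsList [Fintype A] (c : A × A) : c ∈ pairsList A := by
  simp [pairsList, Finset.mem_toList]

lemma mem_distinctPairs [Fintype A] [DecidableEq A] (c : A × A) :
    c ∈ distinctPairs A ↔ c.1 ≠ c.2 := by
  simp [distinctPairs, List.mem_filter, mem_pairsList]

lemma sat_ExForm [Fintype A] {G : GossipGraph A} {σ} :
    Sat G σ (ExForm A) ↔ AllExpert (doCalls G σ) := by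
  rw [ExForm, sat_listConj]
  constructor
  · intro h a b
    have := h (Form.atomS a b) (List.mem_map.2 ⟨(a, b), mem_pairsList _, rfl⟩)
    rwa [sat_atomS] at this
  · rintro h φ hφ
    rcases List.mem_map.1 hφ with ⟨c, _, rfl⟩
    rw [sat_atomS]; exact h c.1 c.2

end SatHelpers


section Levels

lemma ext_destruct {A : Type} {G : GossipGraph A} {perm} {σ : List (A × A)}
    (h : Ext G perm σ) :
    σ = [] ∨ ∃ σ' c, σ = σ' ++ [c] ∧ Ext G perm σ' ∧ perm σ' c := by
  cases h with
  | nil => exact Or.inl rfl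
  | snoc h' hp => exact Or.inr ⟨_, _, rfl, h', hp⟩

lemma ext_snoc_iff {A : Type} {G : GossipGraph A} {perm} {σ : List (A × A)} {c} :
    Ext G perm (σ ++ [c]) ↔ Ext G perm σ ∧ perm σ c := by
  constructor
  · intro h
    rcases ext_destruct h with h0 | ⟨σ', c', heq, h', hp⟩
    · simp at h0
    · obtain ⟨rfl, hc⟩ := List.append_inj' heq (by simp)
      obtain rfl : c = c' := by simpa using hc
      exact ⟨h', hp⟩
  · rintro ⟨h, hp⟩; exact Ext.snoc h hp

def allC : List C := (List.finRange 4).flatMap (fun i => (List.finRange 4).map (fun j => (i, j)))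

lemma mem_allC : ∀ c : C, c ∈ allC := by decide

def levelsF (permB : List C → C → Bool) : Nat → List (List C)
  | 0 => [[]]
  | n + 1 => (levelsF permB n).flatMap
      (fun σ => (allC.filter (permB σ)).map (fun c => σ ++ [c]))

lemma mem_levelsF {permB : List C → C → Bool} {perm : List C → C → Prop}
    (hperm : ∀ ρ c, permB ρ c = true ↔ perm ρ c) :
    ∀ n σ, σ ∈ levelsF permB n ↔ (Ext diamond perm σ ∧ σ.length = n)
  | 0, σ => by
    simp only [levelsF, List.mem_singleton, List.length_eq_zero_iff]
    constructor
    · rintro rfl; exact ⟨Ext.nil, rfl⟩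
    · rintro ⟨_, rfl⟩; rfl
  | n + 1, σ => by
    simp only [levelsF, List.mem_flatMap, List.mem_map, List.mem_filter]
    constructor
    · rintro ⟨σ', hσ', c, ⟨_, hpc⟩, rfl⟩
      obtain ⟨hext, hlen⟩ := (mem_levelsF hperm n σ').1 hσ'
      exact ⟨Ext.snoc hext ((hperm _ _).1 hpc), by simp [hlen]⟩
    · rintro ⟨hext, hlen⟩
      rcases ext_destruct hext with rfl | ⟨σ', c, rfl, h', hp⟩
      · simp at hlen
      · refine ⟨σ', (mem_levelsF hperm n σ').2 ⟨h', ?_⟩, c, ⟨mem_allC c, (hperm _ _).2 hp⟩, rfl⟩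
        have : σ'.length + 1 = n + 1 := by simpa using hlen
        omega

lemma SF_snoc (σ : List C) (c : C) : SF (σ ++ [c]) = stepF (SF σ) c := by
  simp [SF, List.foldl_append]

lemma SF_card_lt {σ : List C} {c : C} (hc : (c.1, c.2) ∉ SF σ) :
    (SF σ).card < (SF (σ ++ [c])).card := by
  rw [SF_snoc]
  apply Finset.card_lt_card
  constructor
  · exact Finset.subset_union_left
  · intro hsub
    apply hc
    apply hsub
    have hd : (c.2, c.2) ∈ SF σ := (mem_SF σ (c.2, c.2)).2 ((doCalls diamond σ).refl_S c.2)
    simp only [stepF, Finset.mem_union, Finset.mem_filter, Finset.mem_univ, true_and]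
    tauto

lemma diag_card_le (σ : List C) : 4 ≤ (SF σ).card := by
  have h : (S0 : Finset C) ⊆ SF σ := by
    intro p hp
    have hd : p.1 = p.2 := (show ∀ q : C, q ∈ S0 → q.1 = q.2 by decide) p hp
    have hs : (doCalls diamond σ).S p.1 p.2 := by
      rw [← hd]; exact (doCalls diamond σ).refl_S p.1
    have := (mem_SF σ (p.1, p.2)).2 hs
    simpa using this
  calc 4 = (S0 : Finset C).card := by decide
    _ ≤ _ := Finset.card_le_card h

lemma ext_card (perm : List C → C → Prop)
    (hLNS : ∀ ρ c, perm ρ c → (c.1, c.2) ∉ SF ρ) {σ : List C}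
    (h : Ext diamond perm σ) : σ.length + 4 ≤ (SF σ).card := by
  induction h with
  | nil => decide
  | @snoc σ c h hp ih =>
    have := SF_card_lt (hLNS _ _ hp)
    simp only [List.length_append, List.length_singleton]
    omega

lemma ext_length_le (perm : List C → C → Prop)
    (hLNS : ∀ ρ c, perm ρ c → (c.1, c.2) ∉ SF ρ) {σ : List C}
    (h : Ext diamond perm σ) : σ.length ≤ 12 := by
  have h1 := ext_card perm hLNS h
  have h2 : (SF σ).card ≤ 16 := by
    calc (SF σ).card ≤ (Finset.univ : Finset C).card := Finset.card_le_univ _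
      _ = 16 := by decide
  omega

end Levels


section EpiClass

def agreeB (σ' τ' : List C) (b : Fin 4) : Bool :=
  (List.finRange 4).all (fun x => (nB σ' b x == nB τ' b x) && (sB σ' b x == sB τ' b x))

lemma agreeB_iff (σ' τ' : List C) (b : Fin 4) : agreeB σ' τ' b = true ↔
    ((∀ x, (doCalls diamond τ').N b x ↔ (doCalls diamond σ').N b x) ∧
     (∀ x, (doCalls diamond τ').S b x ↔ (doCalls diamond σ').S b x)) := by
  simp only [agreeB, List.all_eq_true, List.mem_finRange, Bool.and_eq_true, beq_iff_eq,
    forall_const]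
  constructor
  · intro h
    refine ⟨fun x => ?_, fun x => ?_⟩
    · rw [← nB_iff, ← nB_iff, (h x).1]
    · rw [← sB_iff, ← sB_iff, (h x).2]
  · intro h x
    constructor
    · rw [Bool.eq_iff_iff, nB_iff, nB_iff]; exact (h.1 x).symm
    · rw [Bool.eq_iff_iff, sB_iff, sB_iff]; exact (h.2 x).symm

def epiExtB (permB : List C → C → Bool) (a : Fin 4) (σ' : List C) (d : C)
    (τ' : List C) : List (List C) :=
  if d.1 = a then
    if permB τ' d && agreeB σ' τ' d.2 then [τ' ++ [d]] else []
  else if d.2 = a then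
    if permB τ' d && agreeB σ' τ' d.1 then [τ' ++ [d]] else []
  else
    (allC.filter (fun c => !decide (c.1 = a) && !decide (c.2 = a) && permB τ' c)).map
      (fun c => τ' ++ [c])

def epiR (permB : List C → C → Bool) (a : Fin 4) : List C → List (List C)
  | [] => [[]]
  | d :: σr =>
    if permB σr.reverse d then (epiR permB a σr).flatMap (epiExtB permB a σr.reverse d) else []

def epiClass (permB : List C → C → Bool) (a : Fin 4) (σ : List C) : List (List C) :=
  epiR permB a σ.reverse

lemma epi_nil {A : Type} {G : GossipGraph A} {perm a} {τ : List (A × A)}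
    (h : Epi G perm a τ []) : τ = [] := by
  generalize hσ : ([] : List (A × A)) = σ' at h
  cases h with
  | refl => rfl
  | call_out h1 h2 h3 h4 h5 => exact absurd hσ.symm (by simp)
  | call_in h1 h2 h3 h4 h5 => exact absurd hσ.symm (by simp)
  | other h1 h2 h3 h4 h5 h6 h7 => exact absurd hσ.symm (by simp)

lemma mem_epiClass {permB : List C → C → Bool} {perm : List C → C → Prop}
    (hperm : ∀ ρ c, permB ρ c = true ↔ perm ρ c)
    (hne : ∀ ρ c, perm ρ c → c.1 ≠ c.2) (a : Fin 4) :
    ∀ σ τ : List C, τ ∈ epiClass permB a σ ↔ Epi diamond perm a τ σ := by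
  intro σ
  induction σ using List.reverseRecOn with
  | nil =>
    intro τ
    simp only [epiClass, List.reverse_nil, epiR, List.mem_singleton]
    constructor
    · rintro rfl; exact Epi.refl
    · exact epi_nil
  | append_singleton σ' d ih =>
    intro τ
    have hcls : epiClass permB a (σ' ++ [d]) =
        if permB σ' d then (epiClass permB a σ').flatMap (epiExtB permB a σ' d) else [] := by
      simp only [epiClass, List.reverse_append, List.reverse_singleton, List.singleton_append,
        epiR, List.reverse_reverse]
    rw [hcls]
    constructor
    · intro hmem
      by_cases hp : permB σ' d = true
      swap
      · rw [if_neg hp] at hmem; simp at hmem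
      rw [if_pos hp] at hmem
      rcases List.mem_flatMap.1 hmem with ⟨τ', hτ', hext⟩
      have hepi : Epi diamond perm a τ' σ' := (ih τ').1 hτ'
      unfold epiExtB at hext
      by_cases h1 : d.1 = a
      · rw [if_pos h1] at hext
        by_cases h2 : (permB τ' d && agreeB σ' τ' d.2) = true
        swap
        · rw [if_neg h2] at hext; simp at hext
        rw [if_pos h2] at hext
        obtain rfl : τ = τ' ++ [d] := by simpa using hext
        rw [Bool.and_eq_true] at h2
        rcases h2 with ⟨hpd, hag⟩
        rcases (agreeB_iff σ' τ' d.2).1 hag with ⟨hN, hS⟩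
        have hd : d = (a, d.2) := by rw [← h1]
        rw [hd]
        exact Epi.call_out hepi hN hS (by rw [← hd]; exact (hperm _ _).1 hpd)
          (by rw [← hd]; exact (hperm _ _).1 hp)
      · rw [if_neg h1] at hext
        by_cases h2 : d.2 = a
        · rw [if_pos h2] at hext
          by_cases h3 : (permB τ' d && agreeB σ' τ' d.1) = true
          swap
          · rw [if_neg h3] at hext; simp at hext
          rw [if_pos h3] at hext
          obtain rfl : τ = τ' ++ [d] := by simpa using hext
          rw [Bool.and_eq_true] at h3
          rcases h3 with ⟨hpd, hag⟩
          rcases (agreeB_iff σ' τ' d.1).1 hag with ⟨hN, hS⟩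
          have hd : d = (d.1, a) := by rw [← h2]
          rw [hd]
          exact Epi.call_in hepi hN hS (by rw [← hd]; exact (hperm _ _).1 hpd)
            (by rw [← hd]; exact (hperm _ _).1 hp)
        · rw [if_neg h2] at hext
          rcases List.mem_map.1 hext with ⟨c, hcmem, rfl⟩
          rcases List.mem_filter.1 hcmem with ⟨-, hcond⟩
          simp only [Bool.and_eq_true, Bool.not_eq_true', decide_eq_false_iff_not] at hcond
          obtain ⟨⟨hc1, hc2⟩, hpc⟩ := hcond
          have : Epi diamond perm a (τ' ++ [(c.1, c.2)]) (σ' ++ [(d.1, d.2)]) :=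
            Epi.other hepi hc1 hc2 h1 h2 ((hperm _ _).1 hpc) ((hperm _ _).1 hp)
          simpa using this
    · intro h
      generalize hσeq : σ' ++ [d] = σfull at h
      cases h with
      | refl => exact absurd hσeq (by simp)
      | @call_out τ0 σ0 b hepi hN hS hp1 hp2 =>
        obtain ⟨rfl, hd⟩ := List.append_inj' hσeq (by simp)
        obtain rfl : d = (a, b) := by simpa using hd
        rw [if_pos ((hperm _ _).2 hp2)]
        apply List.mem_flatMap.2
        refine ⟨τ0, (ih τ0).2 hepi, ?_⟩
        unfold epiExtB
        rw [if_pos rfl]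
        rw [if_pos (by rw [Bool.and_eq_true]
                       exact ⟨(hperm _ _).2 hp1, (agreeB_iff σ' τ0 b).2 ⟨hN, hS⟩⟩)]
        simp
      | @call_in τ0 σ0 b hepi hN hS hp1 hp2 =>
        obtain ⟨rfl, hd⟩ := List.append_inj' hσeq (by simp)
        obtain rfl : d = (b, a) := by simpa using hd
        have hba : b ≠ a := by
          intro hcon
          exact (hne _ _ hp2) (by simp [hcon])
        rw [if_pos ((hperm _ _).2 hp2)]
        apply List.mem_flatMap.2
        refine ⟨τ0, (ih τ0).2 hepi, ?_⟩
        unfold epiExtB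
        rw [if_neg hba]
        rw [if_pos rfl]
        rw [if_pos (by rw [Bool.and_eq_true]
                       exact ⟨(hperm _ _).2 hp1, (agreeB_iff σ' τ0 b).2 ⟨hN, hS⟩⟩)]
        simp
      | @other τ0 σ0 c1 c2 e f hepi hc1 hc2 he hf hp1 hp2 =>
        obtain ⟨rfl, hd⟩ := List.append_inj' hσeq (by simp)
        obtain rfl : d = (e, f) := by simpa using hd
        rw [if_pos ((hperm _ _).2 hp2)]
        apply List.mem_flatMap.2
        refine ⟨τ0, (ih τ0).2 hepi, ?_⟩
        unfold epiExtB
        rw [if_neg he, if_neg hf]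
        apply List.mem_map.2
        refine ⟨(c1, c2), List.mem_filter.2 ⟨mem_allC _, ?_⟩, rfl⟩
        simp only [Bool.and_eq_true, Bool.not_eq_true', decide_eq_false_iff_not]
        exact ⟨⟨hc1, hc2⟩, (hperm _ _).2 hp1⟩

end EpiClass


section ProtProg

variable {A : Type} [Fintype A] [DecidableEq A]

lemma progRel_foldr_cup {G : GossipGraph A} {g : A × A → Prog A} :
    ∀ (l : List (A × A)) (x y : List (A × A)),
      ProgRel G ((l.map g).foldr Prog.cup (Prog.test (Form.neg Form.top))) x y ↔
        ∃ c ∈ l, ProgRel G (g c) x y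
  | [], x, y => by
    simp only [List.map_nil, List.foldr_nil, List.not_mem_nil, false_and, exists_false,
      iff_false]
    rintro ⟨-, hsat⟩
    rw [sat_neg] at hsat
    exact hsat trivial
  | c :: l, x, y => by
    simp only [List.map_cons, List.foldr_cons, List.mem_cons]
    show ProgRel G _ x y ∨ ProgRel G _ x y ↔ _
    rw [progRel_foldr_cup l x y]
    constructor
    · rintro (h | ⟨c', hc', h⟩)
      · exact ⟨c, Or.inl rfl, h⟩
      · exact ⟨c', Or.inr hc', h⟩
    · rintro ⟨c', (rfl | hc'), h⟩
      · exact Or.inl h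
      · exact Or.inr ⟨c', hc', h⟩

lemma progRel_protProg {G : GossipGraph A} {P : Protocol A} {σ τ : List (A × A)} :
    ProgRel G (protProg A P) σ τ ↔
      (Relation.ReflTransGen (fun x y => ∃ c : A × A, Permits G P x c ∧ y = x ++ [c]) σ τ ∧
        ∀ c : A × A, ¬ Permits G P τ c) := by
  have hstep : ∀ x y : List (A × A),
      ProgRel G (((distinctPairs A).map (fun c =>
        Prog.seq (Prog.test (Form.conj (Form.atomN c.1 c.2) (P c.1 c.2))) (Prog.call c.1 c.2))).foldr
          Prog.cup (Prog.test (Form.neg Form.top))) x y ↔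
        ∃ c : A × A, Permits G P x c ∧ y = x ++ [c] := by
    intro x y
    rw [progRel_foldr_cup]
    constructor
    · rintro ⟨c, hc, h⟩
      rcases h with ⟨ρ, ⟨rfl, hsat⟩, hne, hN, rfl⟩
      rw [sat_conj] at hsat
      exact ⟨c, ⟨hne, hN, hsat.2⟩, rfl⟩
    · rintro ⟨c, ⟨hne, hN, hsat⟩, rfl⟩
      refine ⟨c, (mem_distinctPairs c).2 hne, x, ⟨rfl, ?_⟩, hne, hN, rfl⟩
      rw [sat_conj, sat_atomN]
      exact ⟨hN, hsat⟩
  have hterm : ∀ y : List (A × A),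
      Sat G y (listConj ((distinctPairs A).map (fun c =>
        Form.neg (Form.conj (Form.atomN c.1 c.2) (P c.1 c.2))))) ↔
        ∀ c : A × A, ¬ Permits G P y c := by
    intro y
    rw [sat_listConj]
    constructor
    · rintro h c ⟨hne, hN, hsat⟩
      have := h (Form.neg (Form.conj (Form.atomN c.1 c.2) (P c.1 c.2)))
        (List.mem_map.2 ⟨c, (mem_distinctPairs c).2 hne, rfl⟩)
      rw [sat_neg, sat_conj, sat_atomN] at this
      exact this ⟨hN, hsat⟩
    · intro h φ hφ
      rcases List.mem_map.1 hφ with ⟨c, hc, rfl⟩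
      rw [sat_neg, sat_conj, sat_atomN]
      rintro ⟨hN, hsat⟩
      exact h c ⟨(mem_distinctPairs c).1 hc, hN, hsat⟩
  constructor
  · rintro ⟨ρ, hstar, rfl, hsat⟩
    exact ⟨Relation.ReflTransGen.mono (fun x y h => (hstep x y).1 h) _ _ hstar, (hterm _).1 hsat⟩
  · rintro ⟨hrtc, h⟩
    refine ⟨τ, ?_, rfl, (hterm τ).2 h⟩
    exact Relation.ReflTransGen.mono (fun x y hh => (hstep x y).2 hh) _ _ hrtc

end ProtProg

section LNSsearch

def lnsB (σ : List C) (c : C) : Bool :=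
  decide (c.1 ≠ c.2) && nB σ c.1 c.2 && !sB σ c.1 c.2

lemma lnsB_iff (σ : List C) (c : C) :
    lnsB σ c = true ↔ Permits diamond (LNSsyn (Fin 4)) σ c := by
  simp only [lnsB, Bool.and_eq_true, decide_eq_true_eq, Bool.not_eq_true',
    Bool.eq_false_iff, Ne, nB_iff, sB_iff, Permits, LNSsyn, sat_neg, sat_atomS]
  tauto

def exB (σ : List C) : Bool := allC.all (fun c => sB σ c.1 c.2)

lemma exB_iff (σ : List C) : exB σ = true ↔ AllExpert (doCalls diamond σ) := by
  simp only [exB, List.all_eq_true, sB_iff, AllExpert]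
  constructor
  · intro h a b; exact h (a, b) (mem_allC _)
  · intro h c _; exact h c.1 c.2

def lnsR (x y : List C) : Prop :=
  ∃ c : C, Permits diamond (LNSsyn (Fin 4)) x c ∧ y = x ++ [c]

def lnsSucc : Nat → List C → Bool
  | 0, _ => false
  | n + 1, σ =>
    let cs := allC.filter (fun c => lnsB σ c)
    if cs.isEmpty then exB σ
    else cs.any (fun c => lnsSucc n (σ ++ [c]))

def lnsGoal (τ : List C) : Prop :=
  (∀ c : C, ¬ Permits diamond (LNSsyn (Fin 4)) τ c) ∧ AllExpert (doCalls diamond τ)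

lemma lnsSucc_sound : ∀ n σ, lnsSucc n σ = true →
    ∃ τ, Relation.ReflTransGen lnsR σ τ ∧ lnsGoal τ
  | 0, σ, h => by simp [lnsSucc] at h
  | n + 1, σ, h => by
    rw [lnsSucc] at h
    by_cases hemp : (allC.filter (fun c => lnsB σ c)).isEmpty
    · rw [if_pos hemp] at h
      refine ⟨σ, Relation.ReflTransGen.refl, ?_, (exB_iff σ).1 h⟩
      intro c hc
      have hmem : c ∈ allC.filter (fun c => lnsB σ c) :=
        List.mem_filter.2 ⟨mem_allC c, (lnsB_iff σ c).2 hc⟩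
      rw [List.isEmpty_iff] at hemp
      rw [hemp] at hmem
      simp at hmem
    · rw [if_neg hemp] at h
      rcases List.any_eq_true.1 h with ⟨c, hc, hrec⟩
      rcases lnsSucc_sound n (σ ++ [c]) hrec with ⟨τ, hrtc, hgoal⟩
      have hperm : Permits diamond (LNSsyn (Fin 4)) σ c :=
        (lnsB_iff σ c).1 (List.mem_filter.1 hc).2
      exact ⟨τ, Relation.ReflTransGen.head ⟨c, hperm, rfl⟩ hrtc, hgoal⟩

lemma lnsSucc_complete {σ τ : List C} (hrtc : Relation.ReflTransGen lnsR σ τ)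
    (hgoal : lnsGoal τ) : ∀ n, 16 - (SF σ).card < n → lnsSucc n σ = true := by
  induction hrtc using Relation.ReflTransGen.head_induction_on with
  | refl =>
    intro n hn
    match n with
    | m + 1 =>
      rw [lnsSucc]
      have hemp : (allC.filter (fun c => lnsB τ c)).isEmpty := by
        rw [List.isEmpty_iff, List.filter_eq_nil_iff]
        exact fun c _ hc => hgoal.1 c ((lnsB_iff τ c).1 hc)
      rw [if_pos hemp]
      exact (exB_iff τ).2 hgoal.2
  | @head x x' hstep hrest ih =>
    intro n hn
    rcases hstep with ⟨cc, hperm, rfl⟩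
    match n with
    | m + 1 =>
      rw [lnsSucc]
      have hcmem : cc ∈ allC.filter (fun c => lnsB x c) :=
        List.mem_filter.2 ⟨mem_allC _, (lnsB_iff x cc).2 hperm⟩
      rw [if_neg (fun h => by rw [List.isEmpty_iff] at h; rw [h] at hcmem; simp at hcmem)]
      apply List.any_eq_true.2
      refine ⟨cc, hcmem, ih m ?_⟩
      have hns : (cc.1, cc.2) ∉ SF x := by
        rcases hperm with ⟨-, -, hsat⟩
        simp only [LNSsyn, sat_neg, sat_atomS] at hsat
        rw [mem_SF]
        exact hsat
      have hlt := SF_card_lt hns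
      have hle : (SF (x ++ [cc])).card ≤ 16 := by
        calc (SF (x ++ [cc])).card ≤ (Finset.univ : Finset C).card := Finset.card_le_univ _
          _ = 16 := by decide
      omega

end LNSsearch


section HLA

lemma lnsSucc13_iff (σ : List C) : lnsSucc 13 σ = true ↔
    ∃ τ, Relation.ReflTransGen lnsR σ τ ∧ lnsGoal τ := by
  constructor
  · exact lnsSucc_sound 13 σ
  · rintro ⟨τ, hrtc, hgoal⟩
    apply lnsSucc_complete hrtc hgoal
    have := diag_card_le σ
    omega

lemma sat_reach (σ : List C) :
    Sat diamond σ (Form.neg (Form.box (protProg (Fin 4) (LNSsyn (Fin 4)))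
      (Form.neg (ExForm (Fin 4))))) ↔ lnsSucc 13 σ = true := by
  rw [sat_neg, sat_box, lnsSucc13_iff]
  constructor
  · intro h
    rcases not_forall.1 h with ⟨τ, hτ⟩
    rcases _root_.not_imp.1 hτ with ⟨hrel, hex⟩
    rw [sat_neg, not_not] at hex
    rcases progRel_protProg.1 hrel with ⟨hrtc, hterm⟩
    exact ⟨τ, hrtc, hterm, sat_ExForm.1 hex⟩
  · rintro ⟨τ, hrtc, hterm, hex⟩ hall
    have := hall τ (progRel_protProg.2 ⟨hrtc, hterm⟩)
    rw [sat_neg] at this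
    exact this (sat_ExForm.2 hex)

def hlaB (σ : List C) (c : C) : Bool :=
  !sB σ c.1 c.2 &&
  (epiClass lnsB c.1 σ).all (fun τ =>
    !(decide (c.1 ≠ c.2) && nB τ c.1 c.2) || lnsSucc 13 (τ ++ [c]))

lemma hlaB_iff (σ : List C) (c : C) :
    hlaB σ c = true ↔ Sat diamond σ (hardLookAhead (LNSsyn (Fin 4)) c.1 c.2) := by
  have hK := mem_epiClass (permB := lnsB) (perm := Permits diamond (LNSsyn (Fin 4)))
    (fun ρ cc => lnsB_iff ρ cc) (fun ρ cc h => h.1) c.1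
  rw [show hardLookAhead (LNSsyn (Fin 4)) c.1 c.2 = Form.conj (LNSsyn (Fin 4) c.1 c.2)
    (Form.K c.1 (LNSsyn (Fin 4)) (Form.box (Prog.call c.1 c.2)
      (Form.neg (Form.box (protProg (Fin 4) (LNSsyn (Fin 4)))
        (Form.neg (ExForm (Fin 4))))))) from rfl]
  rw [sat_conj, sat_K]
  rw [hlaB, Bool.and_eq_true]
  constructor
  · rintro ⟨h1, h2⟩
    constructor
    · show Sat diamond σ (Form.neg (Form.atomS c.1 c.2))
      rw [sat_neg, sat_atomS]
      intro hs
      rw [Bool.not_eq_true', Bool.eq_false_iff] at h1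
      exact h1 ((sB_iff σ c.1 c.2).2 hs)
    · intro τ hepi
      have hmem : τ ∈ epiClass lnsB c.1 σ := (hK σ τ).2 hepi
      have hb := List.all_eq_true.1 h2 τ hmem
      rw [sat_box_call]
      intro hne hN
      rw [sat_reach]
      rw [Bool.or_eq_true] at hb
      rcases hb with hfalse | hsucc
      · exfalso
        rw [Bool.not_eq_true', Bool.and_eq_false_iff] at hfalse
        rcases hfalse with h | h
        · rw [decide_eq_false_iff_not, not_not] at h
          exact hne h
        · rw [Bool.eq_false_iff] at h
          exact h ((nB_iff τ c.1 c.2).2 hN)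
      · exact hsucc
  · rintro ⟨h1, h2⟩
    constructor
    · rw [show LNSsyn (Fin 4) c.1 c.2 = Form.neg (Form.atomS c.1 c.2) from rfl,
        sat_neg, sat_atomS] at h1
      rw [Bool.not_eq_true', Bool.eq_false_iff]
      exact fun hb => h1 ((sB_iff σ c.1 c.2).1 hb)
    · apply List.all_eq_true.2
      intro τ hmem
      have hepi := (hK σ τ).1 hmem
      have hsat := h2 τ hepi
      rw [sat_box_call] at hsat
      rw [Bool.or_eq_true]
      by_cases hne : c.1 = c.2
      · left; simp [hne]
      by_cases hN : nB τ c.1 c.2 = true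
      · right
        rw [← sat_reach]
        exact hsat hne ((nB_iff τ c.1 c.2).1 hN)
      · left
        rw [Bool.not_eq_true', Bool.and_eq_false_iff]
        exact Or.inr (Bool.eq_false_iff.2 hN)

def qB (σ : List C) (c : C) : Bool :=
  decide (c.1 ≠ c.2) && nB σ c.1 c.2 && hlaB σ c

lemma qB_iff (σ : List C) (c : C) :
    qB σ c = true ↔ Permits diamond (hardLookAhead (LNSsyn (Fin 4))) σ c := by
  rw [qB, Bool.and_eq_true, Bool.and_eq_true, Permits, hlaB_iff]
  simp only [decide_eq_true_eq, nB_iff]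
  tauto

def osbB (ρ : List C) : Bool := exB ρ || allC.any (fun c => qB ρ c)

lemma osbB_iff (ρ : List C) :
    osbB ρ = true ↔ Sat diamond ρ (oneStepBody (Fin 4) (hardLookAhead (LNSsyn (Fin 4)))) := by
  rw [oneStepBody, sat_orF, sat_ExForm, sat_listDisj, osbB, Bool.or_eq_true, exB_iff,
    List.any_eq_true]
  constructor
  · rintro (h | ⟨c, _, hq⟩)
    · exact Or.inl h
    · rcases (qB_iff _ _).1 hq with ⟨hne, hN, hsat⟩
      refine Or.inr ⟨_, List.mem_map.2 ⟨c, (mem_distinctPairs c).2 hne, rfl⟩, ?_⟩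
      rw [sat_conj, sat_atomN]
      exact ⟨hN, hsat⟩
  · rintro (h | ⟨φ, hφ, hsat⟩)
    · exact Or.inl h
    · rcases List.mem_map.1 hφ with ⟨c, hc, rfl⟩
      rw [sat_conj, sat_atomN] at hsat
      exact Or.inr ⟨c, mem_allC c, (qB_iff _ _).2
        ⟨(mem_distinctPairs c).1 hc, hsat.1, hsat.2⟩⟩

def hosSatB (σ : List C) (c : C) : Bool :=
  hlaB σ c &&
  (epiClass qB c.1 σ).all (fun τ =>
    !(decide (c.1 ≠ c.2) && nB τ c.1 c.2) || osbB (τ ++ [c]))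

lemma hosSatB_iff (σ : List C) (c : C) :
    hosSatB σ c = true ↔
      Sat diamond σ (hardOneStep (hardLookAhead (LNSsyn (Fin 4))) c.1 c.2) := by
  have hK := mem_epiClass (permB := qB)
    (perm := Permits diamond (hardLookAhead (LNSsyn (Fin 4))))
    (fun ρ cc => qB_iff ρ cc) (fun ρ cc h => h.1) c.1
  rw [show hardOneStep (hardLookAhead (LNSsyn (Fin 4))) c.1 c.2 =
    Form.conj (hardLookAhead (LNSsyn (Fin 4)) c.1 c.2)
      (Form.K c.1 (hardLookAhead (LNSsyn (Fin 4))) (Form.box (Prog.call c.1 c.2)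
        (oneStepBody (Fin 4) (hardLookAhead (LNSsyn (Fin 4)))))) from rfl]
  rw [sat_conj, sat_K, hosSatB, Bool.and_eq_true, hlaB_iff]
  constructor
  · rintro ⟨h1, h2⟩
    refine ⟨h1, ?_⟩
    intro τ hepi
    have hmem : τ ∈ epiClass qB c.1 σ := (hK σ τ).2 hepi
    have hb := List.all_eq_true.1 h2 τ hmem
    rw [sat_box_call]
    intro hne hN
    rw [Bool.or_eq_true] at hb
    rcases hb with hfalse | hsucc
    · exfalso
      rw [Bool.not_eq_true', Bool.and_eq_false_iff] at hfalse
      rcases hfalse with h | h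
      · rw [decide_eq_false_iff_not, not_not] at h
        exact hne h
      · rw [Bool.eq_false_iff] at h
        exact h ((nB_iff τ c.1 c.2).2 hN)
    · rw [← osbB_iff]; exact hsucc
  · rintro ⟨h1, h2⟩
    refine ⟨h1, ?_⟩
    apply List.all_eq_true.2
    intro τ hmem
    have hepi := (hK σ τ).1 hmem
    have hsat := h2 τ hepi
    rw [sat_box_call] at hsat
    rw [Bool.or_eq_true]
    by_cases hne : c.1 = c.2
    · left; simp [hne]
    by_cases hN : nB τ c.1 c.2 = true
    · right
      rw [osbB_iff]
      exact hsat hne ((nB_iff τ c.1 c.2).1 hN)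
    · left
      rw [Bool.not_eq_true', Bool.and_eq_false_iff]
      exact Or.inr (Bool.eq_false_iff.2 hN)

def hosB (σ : List C) (c : C) : Bool :=
  decide (c.1 ≠ c.2) && nB σ c.1 c.2 && hosSatB σ c

lemma hosB_iff (σ : List C) (c : C) :
    hosB σ c = true ↔
      Permits diamond (hardOneStep (hardLookAhead (LNSsyn (Fin 4)))) σ c := by
  rw [hosB, Bool.and_eq_true, Bool.and_eq_true, Permits, hosSatB_iff]
  simp only [decide_eq_true_eq, nB_iff]
  tauto

end HLA


section Final

def termListB (permB : List C → C → Bool) : List (List C) :=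
  ((List.range 13).flatMap (levelsF permB)).filter (fun σ => allC.all (fun c => !permB σ c))

def succFin (permB : List C → C → Bool) : Finset (List C) :=
  ((termListB permB).filter exB).toFinset

def unsuccFin (permB : List C → C → Bool) : Finset (List C) :=
  ((termListB permB).filter (fun σ => !exB σ)).toFinset

variable {permB : List C → C → Bool} {P : Protocol (Fin 4)}

lemma mem_ext_iff {σ : List C} :
    σ ∈ extension P diamond ↔ Ext diamond (Permits diamond P) σ := Iff.rfl

lemma mem_termListB (hperm : ∀ ρ c, permB ρ c = true ↔ Permits diamond P ρ c)
    (hLNS : ∀ ρ c, Permits diamond P ρ c → (c.1, c.2) ∉ SF ρ) (σ : List C) :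
    σ ∈ termListB permB ↔
      (Ext diamond (Permits diamond P) σ ∧ ∀ c : C, ¬ Permits diamond P σ c) := by
  rw [termListB, List.mem_filter, List.mem_flatMap]
  constructor
  · rintro ⟨⟨n, _, hlev⟩, hterm⟩
    obtain ⟨hext, -⟩ := (mem_levelsF hperm n σ).1 hlev
    refine ⟨hext, fun c hc => ?_⟩
    have h1 : permB σ c = true := (hperm σ c).2 hc
    have h2 := List.all_eq_true.1 hterm c (mem_allC c)
    rw [Bool.not_eq_true', h1] at h2
    simp at h2
  · rintro ⟨hext, hterm⟩
    refine ⟨⟨σ.length, ?_, (mem_levelsF hperm σ.length σ).2 ⟨hext, rfl⟩⟩, ?_⟩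
    · rw [List.mem_range]
      have := ext_length_le (Permits diamond P) hLNS hext
      omega
    · apply List.all_eq_true.2
      intro c _
      rw [Bool.not_eq_true', Bool.eq_false_iff]
      exact fun hb => hterm c ((hperm σ c).1 hb)

lemma terminalIn_iff (σ : List C) :
    TerminalIn (extension P) diamond σ ↔
      ∀ c : C, ¬ (Ext diamond (Permits diamond P) σ ∧ Permits diamond P σ c) := by
  constructor
  · rintro h c ⟨hext, hp⟩
    exact h c (Ext.snoc hext hp)
  · intro h c hmem
    have hx : Ext diamond (Permits diamond P) (σ ++ [c]) := hmem
    rw [ext_snoc_iff] at hx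
    exact h c hx

lemma succ_set_eq (hperm : ∀ ρ c, permB ρ c = true ↔ Permits diamond P ρ c)
    (hLNS : ∀ ρ c, Permits diamond P ρ c → (c.1, c.2) ∉ SF ρ) :
    succTerminals (extension P) diamond = ↑(succFin permB) := by
  ext σ
  rw [succTerminals, Set.mem_setOf_eq, Finset.mem_coe, succFin, List.mem_toFinset,
    List.mem_filter, mem_termListB hperm hLNS, exB_iff, mem_ext_iff, terminalIn_iff]
  constructor
  · rintro ⟨hext, hterm, hex⟩
    exact ⟨⟨hext, fun c hc => hterm c ⟨hext, hc⟩⟩, hex⟩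
  · rintro ⟨⟨hext, hterm⟩, hex⟩
    exact ⟨hext, fun c hc => hterm c hc.2, hex⟩

lemma unsucc_set_eq (hperm : ∀ ρ c, permB ρ c = true ↔ Permits diamond P ρ c)
    (hLNS : ∀ ρ c, Permits diamond P ρ c → (c.1, c.2) ∉ SF ρ) :
    unsuccTerminals (extension P) diamond = ↑(unsuccFin permB) := by
  ext σ
  rw [unsuccTerminals, Set.mem_setOf_eq, Finset.mem_coe, unsuccFin, List.mem_toFinset,
    List.mem_filter, mem_termListB hperm hLNS, mem_ext_iff, terminalIn_iff,
    Bool.not_eq_true', Bool.eq_false_iff, Ne, exB_iff]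
  constructor
  · rintro ⟨hext, hterm, hex⟩
    exact ⟨⟨hext, fun c hc => hterm c ⟨hext, hc⟩⟩, hex⟩
  · rintro ⟨⟨hext, hterm⟩, hex⟩
    exact ⟨hext, fun c hc => hterm c hc.2, hex⟩

lemma q_not_S : ∀ (ρ : List C) (c : C),
    Permits diamond (hardLookAhead (LNSsyn (Fin 4))) ρ c → (c.1, c.2) ∉ SF ρ := by
  intro ρ c h
  have hq := (qB_iff ρ c).2 h
  rw [qB, Bool.and_eq_true] at hq
  have h2 := hq.2
  rw [hlaB, Bool.and_eq_true] at h2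
  have hfst := h2.1
  rw [Bool.not_eq_true', Bool.eq_false_iff] at hfst
  rw [mem_SF]
  exact fun hs => hfst ((sB_iff ρ c.1 c.2).2 hs)

lemma hos_not_S : ∀ (ρ : List C) (c : C),
    Permits diamond (hardOneStep (hardLookAhead (LNSsyn (Fin 4)))) ρ c → (c.1, c.2) ∉ SF ρ := by
  intro ρ c h
  have hq := (hosB_iff ρ c).2 h
  rw [hosB, Bool.and_eq_true] at hq
  have h2 := hq.2
  rw [hosSatB, Bool.and_eq_true] at h2
  have h3 := h2.1
  rw [hlaB, Bool.and_eq_true] at h3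
  have hfst := h3.1
  rw [Bool.not_eq_true', Bool.eq_false_iff] at hfst
  rw [mem_SF]
  exact fun hs => hfst ((sB_iff ρ c.1 c.2).2 hs)

lemma hos_subset :
    extension (hardOneStep (hardLookAhead (LNSsyn (Fin 4)))) diamond ⊆
      extension (hardLookAhead (LNSsyn (Fin 4))) diamond := by
  intro σ h
  rw [mem_ext_iff] at h ⊢
  induction h with
  | nil => exact Ext.nil
  | snoc h hp ih =>
    refine Ext.snoc ih ?_
    obtain ⟨hne, hN, hsat⟩ := hp
    rw [show hardOneStep (hardLookAhead (LNSsyn (Fin 4))) _ _ =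
      Form.conj (hardLookAhead (LNSsyn (Fin 4)) _ _) (Form.K _ _ _) from rfl, sat_conj] at hsat
    exact ⟨hne, hN, hsat.1⟩

end Final


set_option maxHeartbeats 40000000 in
lemma qSuccCard : (succFin qB).card = 8 := by decide

set_option maxHeartbeats 40000000 in
lemma qUnsuccCard : (unsuccFin qB).card = 8 := by decide

set_option maxHeartbeats 40000000 in
lemma hosSuccCard : (succFin hosB).card = 8 := by decide

set_option maxHeartbeats 40000000 in
lemma hosUnsuccCard : (unsuccFin hosB).card = 4 := by decide

/-- Hard look-ahead strengthening does not always yield a fixpoint of hard one-step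
strengthening: on the diamond graph, `LNS^■(G)` has 8 successful and 8 unsuccessful
terminal sequences while `(LNS^■)^□(G)` has 8 successful and 4 unsuccessful terminal
sequences; in particular `(LNS^■)^□(G) ⊊ LNS^■(G)`. -/
theorem hard_lookahead_not_onestep_fixpoint :
    Initial diamond ∧
    (succTerminals (extension (hardLookAhead (LNSsyn (Fin 4)))) diamond).ncard = 8 ∧
    (unsuccTerminals (extension (hardLookAhead (LNSsyn (Fin 4)))) diamond).ncard = 8 ∧
    (succTerminals (extension (hardOneStep (hardLookAhead (LNSsyn (Fin 4))))) diamond).ncard = 8 ∧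
    (unsuccTerminals (extension (hardOneStep (hardLookAhead (LNSsyn (Fin 4))))) diamond).ncard = 4 ∧
    extension (hardOneStep (hardLookAhead (LNSsyn (Fin 4)))) diamond ⊂
      extension (hardLookAhead (LNSsyn (Fin 4))) diamond := by
  have hsu : (succTerminals (extension (hardLookAhead (LNSsyn (Fin 4)))) diamond).ncard = 8 := by
    rw [succ_set_eq qB_iff q_not_S, Set.ncard_coe_finset]
    exact qSuccCard
  have hun : (unsuccTerminals (extension (hardLookAhead (LNSsyn (Fin 4)))) diamond).ncard = 8 := by
    rw [unsucc_set_eq qB_iff q_not_S, Set.ncard_coe_finset]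
    exact qUnsuccCard
  have hsu2 : (succTerminals (extension (hardOneStep (hardLookAhead (LNSsyn (Fin 4))))) diamond).ncard = 8 := by
    rw [succ_set_eq hosB_iff hos_not_S, Set.ncard_coe_finset]
    exact hosSuccCard
  have hun2 : (unsuccTerminals (extension (hardOneStep (hardLookAhead (LNSsyn (Fin 4))))) diamond).ncard = 4 := by
    rw [unsucc_set_eq hosB_iff hos_not_S, Set.ncard_coe_finset]
    exact hosUnsuccCard
  refine ⟨fun a b => Iff.rfl, hsu, hun, hsu2, hun2, ?_⟩
  rw [ssubset_iff_subset_ne]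
  refine ⟨hos_subset, ?_⟩
  intro heq
  have h1 : unsuccTerminals (extension (hardOneStep (hardLookAhead (LNSsyn (Fin 4))))) diamond
      = unsuccTerminals (extension (hardLookAhead (LNSsyn (Fin 4)))) diamond := by
    unfold unsuccTerminals TerminalIn
    rw [heq]
  rw [h1, hun] at hun2
  norm_num at hun2

end Gossip
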